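/- Let p ≥ 2, let N ≥ 1, and let M be a symmetric linear map on ℝ^N with |M ξ| ≤ Λ |ξ| for all ξ ∈ ℝ^N, where Λ ≥ 0. Then for all a, b ∈ ℝ^N, ||b|^{p−2} M b − |a|^{p−2} M a| ≤ Λ (p − 1) (|a| + |b|)^{p−2} |b − a|. -/

import Mathlib

open Real

/-- Key scalar inequality: for `0 ≤ s ≤ t` and `q ≥ 0`,
`(t^q - s^q) * s ≤ q * (s+t)^q * (t-s)`. -/
lemma rpow_diff_mul_le (q s t : ℝ) (hq : 0 ≤ q) (hs : 0 ≤ s) (hst : s ≤ t) :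
    (t ^ q - s ^ q) * s ≤ q * (s + t) ^ q * (t - s) := by
  have ht : 0 ≤ t := hs.trans hst
  rcases le_or_gt 1 q with hq1 | hq1
  · -- q ≥ 1 : use (t^q - s^q) * t ≤ q * t^q * (t - s)
    rcases eq_or_lt_of_le ht with rfl | ht0
    · have hs0 : s = 0 := le_antisymm hst hs
      simp [hs0]
    · have key : (t ^ q - s ^ q) * t ≤ q * t ^ q * (t - s) := by
        have hb : 1 + q * (s / t - 1) ≤ (1 + (s / t - 1)) ^ q :=
          one_add_mul_self_le_rpow_one_add (by
            have : 0 ≤ s / t := div_nonneg hs ht0.le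
            linarith) hq1
        rw [show 1 + (s / t - 1) = s / t by ring] at hb
        have hdiv : (s / t) ^ q = s ^ q / t ^ q := Real.div_rpow hs ht0.le q
        rw [hdiv] at hb
        have htq : 0 < t ^ q := Real.rpow_pos_of_pos ht0 q
        have : (1 + q * (s / t - 1)) * t ^ q ≤ s ^ q := by
          calc (1 + q * (s / t - 1)) * t ^ q ≤ (s ^ q / t ^ q) * t ^ q := by
                exact mul_le_mul_of_nonneg_right hb htq.le
            _ = s ^ q := by field_simp
        have hst' : q * (s / t - 1) * t = q * (s - t) := by field_simp
        nlinarith [htq.le]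
      have htq_le : t ^ q ≤ (s + t) ^ q := Real.rpow_le_rpow ht (by linarith) hq
      calc (t ^ q - s ^ q) * s ≤ (t ^ q - s ^ q) * t := by
            have : 0 ≤ t ^ q - s ^ q := by
              have := Real.rpow_le_rpow hs hst hq; linarith
            nlinarith
        _ ≤ q * t ^ q * (t - s) := key
        _ ≤ q * (s + t) ^ q * (t - s) :=
            mul_le_mul_of_nonneg_right (mul_le_mul_of_nonneg_left htq_le hq)
              (sub_nonneg.mpr hst)
  · -- q ≤ 1 : use (t^q - s^q) * s ≤ q * s^q * (t - s)
    rcases eq_or_lt_of_le hs with rfl | hs0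
    · have h1 : 0 ≤ (0 + t) ^ q := Real.rpow_nonneg (by linarith) q
      have h2 : 0 ≤ t - 0 := by linarith
      simpa using mul_nonneg (mul_nonneg hq h1) h2
    · have key : (t ^ q - s ^ q) * s ≤ q * s ^ q * (t - s) := by
        have hb : (1 + (t / s - 1)) ^ q ≤ 1 + q * (t / s - 1) :=
          rpow_one_add_le_one_add_mul_self (by
            have : 0 ≤ t / s := div_nonneg (hs.trans hst) hs
            linarith) hq hq1.le
        rw [show 1 + (t / s - 1) = t / s by ring] at hb
        have hdiv : (t / s) ^ q = t ^ q / s ^ q := Real.div_rpow (hs.trans hst) hs q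
        rw [hdiv] at hb
        have hsq : 0 < s ^ q := Real.rpow_pos_of_pos hs0 q
        have h2 : t ^ q ≤ (1 + q * (t / s - 1)) * s ^ q := by
          calc t ^ q = (t ^ q / s ^ q) * s ^ q := by field_simp
            _ ≤ (1 + q * (t / s - 1)) * s ^ q := mul_le_mul_of_nonneg_right hb hsq.le
        have hst' : q * (t / s - 1) * s = q * (t - s) := by field_simp
        nlinarith [hsq.le]
      have hsq_le : s ^ q ≤ (s + t) ^ q := Real.rpow_le_rpow hs (by linarith) hq
      calc (t ^ q - s ^ q) * s ≤ q * s ^ q * (t - s) := key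
        _ ≤ q * (s + t) ^ q * (t - s) :=
            mul_le_mul_of_nonneg_right (mul_le_mul_of_nonneg_left hsq_le hq)
              (sub_nonneg.mpr hst)

/-- Vector version (with `‖a‖ ≤ ‖b‖`). -/
lemma vec_rpow_lipschitz_aux {E : Type*} [NormedAddCommGroup E] [NormedSpace ℝ E]
    (q : ℝ) (hq : 0 ≤ q) (a b : E) (h : ‖a‖ ≤ ‖b‖) :
    ‖‖b‖ ^ q • b - ‖a‖ ^ q • a‖ ≤ (1 + q) * (‖a‖ + ‖b‖) ^ q * ‖b - a‖ := by
  set s := ‖a‖; set t := ‖b‖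
  have hs : 0 ≤ s := norm_nonneg a
  have ht : 0 ≤ t := norm_nonneg b
  have hdecomp : ‖b‖ ^ q • b - ‖a‖ ^ q • a
      = ‖b‖ ^ q • (b - a) + (‖b‖ ^ q - ‖a‖ ^ q) • a := by
    rw [smul_sub, sub_smul]; abel
  rw [hdecomp]
  have h1 : ‖(‖b‖ ^ q : ℝ) • (b - a)‖ ≤ (s + t) ^ q * ‖b - a‖ := by
    rw [norm_smul, Real.norm_eq_abs, abs_of_nonneg (Real.rpow_nonneg ht q)]
    exact mul_le_mul_of_nonneg_right
      (Real.rpow_le_rpow ht (by linarith) hq) (norm_nonneg _)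
  have h2 : ‖((‖b‖ ^ q - ‖a‖ ^ q : ℝ)) • a‖ ≤ q * (s + t) ^ q * ‖b - a‖ := by
    rw [norm_smul, Real.norm_eq_abs]
    have hmon : s ^ q ≤ t ^ q := Real.rpow_le_rpow hs h hq
    rw [abs_of_nonneg (by linarith)]
    calc (t ^ q - s ^ q) * s ≤ q * (s + t) ^ q * (t - s) :=
          rpow_diff_mul_le q s t hq hs h
      _ ≤ q * (s + t) ^ q * ‖b - a‖ := by
          have hts : t - s ≤ ‖b - a‖ := by
            have := norm_sub_norm_le b a; linarith
          have hnn : 0 ≤ q * (s + t) ^ q :=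
            mul_nonneg hq (Real.rpow_nonneg (by linarith) q)
          exact mul_le_mul_of_nonneg_left hts hnn
  calc ‖(‖b‖ ^ q : ℝ) • (b - a) + ((‖b‖ ^ q - ‖a‖ ^ q : ℝ)) • a‖
      ≤ ‖(‖b‖ ^ q : ℝ) • (b - a)‖ + ‖((‖b‖ ^ q - ‖a‖ ^ q : ℝ)) • a‖ := norm_add_le _ _
    _ ≤ (s + t) ^ q * ‖b - a‖ + q * (s + t) ^ q * ‖b - a‖ := add_le_add h1 h2
    _ = (1 + q) * (s + t) ^ q * ‖b - a‖ := by ring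

/-- Vector version, general. -/
lemma vec_rpow_lipschitz {E : Type*} [NormedAddCommGroup E] [NormedSpace ℝ E]
    (q : ℝ) (hq : 0 ≤ q) (a b : E) :
    ‖‖b‖ ^ q • b - ‖a‖ ^ q • a‖ ≤ (1 + q) * (‖a‖ + ‖b‖) ^ q * ‖b - a‖ := by
  rcases le_total ‖a‖ ‖b‖ with h | h
  · exact vec_rpow_lipschitz_aux q hq a b h
  · have h1 := vec_rpow_lipschitz_aux q hq b a h
    calc ‖‖b‖ ^ q • b - ‖a‖ ^ q • a‖ = ‖‖a‖ ^ q • a - ‖b‖ ^ q • b‖ := norm_sub_rev _ _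
      _ ≤ (1 + q) * (‖b‖ + ‖a‖) ^ q * ‖a - b‖ := h1
      _ = (1 + q) * (‖a‖ + ‖b‖) ^ q * ‖b - a‖ := by
          rw [add_comm ‖b‖, norm_sub_rev]

/-- Anisotropic Lipschitz-type inequality for `p ≥ 2`:
`||b|^{p-2} M b - |a|^{p-2} M a| ≤ Λ (p-1) (|a| + |b|)^{p-2} |b - a|`. -/
theorem anisotropic_lipschitz_p_ge_two
    (p : ℝ) (hp : 2 ≤ p)
    (N : ℕ) (hN : 1 ≤ N)
    (M : EuclideanSpace ℝ (Fin N) →ₗ[ℝ] EuclideanSpace ℝ (Fin N))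
    (hsymm : ∀ ξ η : EuclideanSpace ℝ (Fin N), (inner ℝ (M ξ) η : ℝ) = inner ℝ ξ (M η))
    (Λ : ℝ) (hΛ : 0 ≤ Λ)
    (hbound : ∀ ξ : EuclideanSpace ℝ (Fin N), ‖M ξ‖ ≤ Λ * ‖ξ‖)
    (a b : EuclideanSpace ℝ (Fin N)) :
    ‖‖b‖ ^ (p - 2) • M b - ‖a‖ ^ (p - 2) • M a‖
      ≤ Λ * (p - 1) * (‖a‖ + ‖b‖) ^ (p - 2) * ‖b - a‖ := by
  set q := p - 2 with hq_def
  have hq : 0 ≤ q := by linarith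
  have hM : ‖b‖ ^ q • M b - ‖a‖ ^ q • M a = M (‖b‖ ^ q • b - ‖a‖ ^ q • a) := by
    rw [map_sub, map_smul, map_smul]
  rw [hM]
  calc ‖M (‖b‖ ^ q • b - ‖a‖ ^ q • a)‖
      ≤ Λ * ‖‖b‖ ^ q • b - ‖a‖ ^ q • a‖ := hbound _
    _ ≤ Λ * ((1 + q) * (‖a‖ + ‖b‖) ^ q * ‖b - a‖) :=
        mul_le_mul_of_nonneg_left (vec_rpow_lipschitz q hq a b) hΛ
    _ = Λ * (p - 1) * (‖a‖ + ‖b‖) ^ q * ‖b - a‖ := by rw [hq_def]; ring
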